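/- Let η : ℝ⁴ → (ℝ⁴)* be a C² covector field on ℝ⁴ with components η₀, η₁, η₂, η₃ (so η(p)(v) = Σⱼ ηⱼ(p)vⱼ), and suppose that dη vanishes at every point of the line C = {x₁=x₂=x₃=0}, i.e. ∂ηⱼ/∂x_k(θ,0) = ∂η_k/∂xⱼ(θ,0) for all j,k ∈ {0,1,2,3} and all θ (where x₀ = θ). Suppose also f₀ : ℝ → ℝ is differentiable with f₀'(θ) = η₀(θ,0) for all θ. Define f(θ,x₁,x₂,x₃) = f₀(θ) + Σᵢ ηᵢ(θ,0)·xᵢ + ½ Σᵢⱼ (∂ηᵢ/∂xⱼ)(θ,0)·xᵢxⱼ, with i,j ranging over {1,2,3}. Then the 1-form η − df agrees with 0 to first order along C: for every θ, (η − df)(θ,0) = 0, and all first-order partial derivatives ∂/∂x_k (k ∈ {1,2,3}) of every component of η − df vanish at (θ,0). -/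

import Mathlib

noncomputable section

/-- The standard basis vectors of ℝ⁴ (coordinates (x₀,x₁,x₂,x₃) = (θ,x₁,x₂,x₃)). -/
def e (i : Fin 4) : Fin 4 → ℝ := Pi.single i 1

/-- The point (θ,0,0,0) on the line C = {x₁=x₂=x₃=0}. -/
def line (θ : ℝ) : Fin 4 → ℝ := Pi.single 0 θ

def P : (Fin 4 → ℝ) →L[ℝ] (Fin 4 → ℝ) := (ContinuousLinearMap.proj 0).smulRight (e 0)
def pr (i : Fin 4) : (Fin 4 → ℝ) →L[ℝ] ℝ := ContinuousLinearMap.proj i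

lemma P_apply (q : Fin 4 → ℝ) : P q = line (q 0) := by
  ext i; simp [P, line, e, Pi.single_apply, eq_comm]

lemma line_zero (θ : ℝ) : line θ 0 = θ := by simp [line]
lemma line_succ (θ : ℝ) (k : Fin 3) : line θ k.succ = 0 := by
  simp [line, Pi.single_apply, (Fin.succ_ne_zero k)]
lemma line_line (θ : ℝ) : line (line θ 0) = line θ := by rw [line_zero]

lemma e_succ_zero (k : Fin 3) : e k.succ 0 = 0 :=
  Pi.single_eq_of_ne (Fin.succ_ne_zero k).symm 1

lemma e_succ_succ (k i : Fin 3) : e k.succ i.succ = if i = k then 1 else 0 := by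
  simp [e, Pi.single_apply, Fin.succ_inj]

lemma P_e (j : Fin 4) : P (e j) = (e j 0) • e 0 := by simp [P]

lemma P_e_succ (k : Fin 3) : P (e k.succ) = 0 := by simp [P_e, e_succ_zero]

lemma hasFDerivAt_mul_zero {c v : (Fin 4 → ℝ) → ℝ} {v' : (Fin 4 → ℝ) →L[ℝ] ℝ} {x : Fin 4 → ℝ}
    (hc : ContinuousAt c x) (hv : HasFDerivAt v v' x) (h0 : v x = 0) :
    HasFDerivAt (fun y => v y * c y) ((c x) • v') x := by
  have h1 : HasFDerivAt (fun y => v y * c x) ((c x) • v') x := hv.mul_const (c x)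
  have h2 : HasFDerivAt (fun y => v y * (c y - c x)) (0 : (Fin 4 → ℝ) →L[ℝ] ℝ) x := by
    apply HasFDerivAt.of_isLittleO
    have hvO : (fun y => v y) =O[nhds x] fun y => ‖y - x‖ := by
      simpa [h0] using hv.isBigO_sub.norm_right
    have hco : (fun y => c y - c x) =o[nhds x] (fun _ => (1:ℝ)) :=
      (Asymptotics.isLittleO_one_iff ℝ).2 (tendsto_sub_nhds_zero_iff.2 hc)
    have := hvO.mul_isLittleO hco
    simp only [mul_one] at this
    have h3 : (fun y => v y * (c y - c x)) =o[nhds x] fun y => y - x := by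
      rw [← Asymptotics.isLittleO_norm_right] at this ⊢
      simpa using this
    simpa [h0] using h3
  have := h2.fun_add h1
  simp only [mul_sub, zero_add] at this
  have hfe : (fun y => v y * c y) = fun y => v y * c y - v y * c x + v y * c x := by
    funext y
    ring
  rw [hfe]
  exact this

variable (η : (Fin 4 → ℝ) → ((Fin 4 → ℝ) →L[ℝ] ℝ))

def Gf (j : Fin 4) : (Fin 4 → ℝ) → ℝ := fun q => η q (e j)
def Hf (i j : Fin 4) : (Fin 4 → ℝ) → ℝ := fun q => fderiv ℝ (Gf η i) q (e j)
def Af (j : Fin 4) : (Fin 4 → ℝ) → ℝ := fun q => Gf η j (line (q 0))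
def Bf (i j : Fin 4) : (Fin 4 → ℝ) → ℝ := fun q => Hf η i j (line (q 0))

variable {η}

lemma hG (hη : ContDiff ℝ 2 η) (j : Fin 4) : ContDiff ℝ 2 (Gf η j) :=
  hη.clm_apply contDiff_const

lemma hH (hη : ContDiff ℝ 2 η) (i j : Fin 4) : ContDiff ℝ 1 (Hf η i j) :=
  ((hG hη i).fderiv_right (by norm_num)).clm_apply contDiff_const

lemma hasFDerivAt_comp_line {φ : (Fin 4 → ℝ) → ℝ} {q : Fin 4 → ℝ}
    (hφ : DifferentiableAt ℝ φ (line (q 0))) :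
    HasFDerivAt (fun p => φ (line (p 0))) ((fderiv ℝ φ (line (q 0))) ∘L P) q := by
  have h1 : HasFDerivAt φ (fderiv ℝ φ (P q)) (P q) := by
    rw [P_apply]; exact hφ.hasFDerivAt
  have := h1.comp q P.hasFDerivAt
  simpa [Function.comp_def, P_apply] using this

lemma hAf (hη : ContDiff ℝ 2 η) (j : Fin 4) (q : Fin 4 → ℝ) :
    HasFDerivAt (Af η j) ((fderiv ℝ (Gf η j) (line (q 0))) ∘L P) q :=
  hasFDerivAt_comp_line (((hG hη j).differentiable (by norm_num)).differentiableAt)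

lemma hBf (hη : ContDiff ℝ 2 η) (i j : Fin 4) (q : Fin 4 → ℝ) :
    HasFDerivAt (Bf η i j) ((fderiv ℝ (Hf η i j) (line (q 0))) ∘L P) q :=
  hasFDerivAt_comp_line (((hH hη i j).differentiable (by norm_num)).differentiableAt)

lemma hBf_cont (hη : ContDiff ℝ 2 η) (i j : Fin 4) :
    Continuous (fun q : Fin 4 → ℝ => fderiv ℝ (Hf η i j) (line (q 0)) (e 0)) := by
  have h1 : Continuous (fderiv ℝ (Hf η i j)) :=
    ((hH hη i j).fderiv_right (m := 0) (by norm_num)).continuous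
  have h2 : Continuous (fun q : Fin 4 → ℝ => line (q 0)) :=
    P.continuous.congr P_apply
  exact (ContinuousLinearMap.apply ℝ ℝ (e 0)).continuous.comp (h1.comp h2)
def Df (η : (Fin 4 → ℝ) → ((Fin 4 → ℝ) →L[ℝ] ℝ)) (q : Fin 4 → ℝ) : (Fin 4 → ℝ) →L[ℝ] ℝ :=
  (Af η 0 q) • pr 0
  + ∑ i : Fin 3, ((Af η i.succ q) • pr i.succ
      + (q i.succ) • ((fderiv ℝ (Gf η i.succ) (line (q 0))) ∘L P))
  + ((1:ℝ)/2) • ∑ i : Fin 3, ∑ j : Fin 3,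
      ((Bf η i.succ j.succ q) • ((q i.succ) • pr j.succ + (q j.succ) • pr i.succ)
        + (q i.succ * q j.succ) • ((fderiv ℝ (Hf η i.succ j.succ) (line (q 0))) ∘L P))

lemma hproj (i : Fin 4) (q : Fin 4 → ℝ) : HasFDerivAt (fun p : Fin 4 → ℝ => p i) (pr i) q :=
  (pr i).hasFDerivAt

lemma hasFDerivAt_F (hη : ContDiff ℝ 2 η) (f₀ : ℝ → ℝ)
    (hf₀ : ∀ θ : ℝ, HasDerivAt f₀ (η (line θ) (e 0)) θ) (q : Fin 4 → ℝ) :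
    HasFDerivAt (fun p => f₀ (p 0) + (∑ i : Fin 3, Af η i.succ p * p i.succ)
      + ((1:ℝ)/2) * ∑ i : Fin 3, ∑ j : Fin 3, Bf η i.succ j.succ p * (p i.succ * p j.succ))
      (Df η q) q := by
  have h1 : HasFDerivAt (fun p : Fin 4 → ℝ => f₀ (p 0)) ((Af η 0 q) • pr 0) q := by
    have := (hf₀ (q 0)).comp_hasFDerivAt q (hproj 0 q)
    simpa [Function.comp_def, Af, Gf] using this
  have h2 : ∀ i : Fin 3, HasFDerivAt (fun p => Af η i.succ p * p i.succ)
      ((Af η i.succ q) • pr i.succ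
        + (q i.succ) • ((fderiv ℝ (Gf η i.succ) (line (q 0))) ∘L P)) q :=
    fun i => (hAf hη i.succ q).mul (hproj i.succ q)
  have h3 : ∀ i j : Fin 3, HasFDerivAt (fun p => Bf η i.succ j.succ p * (p i.succ * p j.succ))
      ((Bf η i.succ j.succ q) • ((q i.succ) • pr j.succ + (q j.succ) • pr i.succ)
        + (q i.succ * q j.succ) • ((fderiv ℝ (Hf η i.succ j.succ) (line (q 0))) ∘L P)) q :=
    fun i j => (hBf hη i.succ j.succ q).mul ((hproj i.succ q).mul (hproj j.succ q))
  exact (h1.add (HasFDerivAt.fun_sum fun i _ => h2 i)).add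
    (((HasFDerivAt.fun_sum fun i _ => HasFDerivAt.fun_sum fun j _ => h3 i j).const_mul ((1:ℝ)/2)))

lemma Df_line (θ : ℝ) (m : Fin 4) : Df η (line θ) (e m) = η (line θ) (e m) := by
  simp only [Df, ContinuousLinearMap.add_apply, ContinuousLinearMap.smul_apply,
    ContinuousLinearMap.coe_sum', Finset.sum_apply, ContinuousLinearMap.coe_comp',
    Function.comp_apply, smul_eq_mul, pr, ContinuousLinearMap.proj_apply,
    line_succ, line_zero, zero_mul, mul_zero, zero_smul, add_zero, zero_add,
    Finset.sum_const_zero, smul_zero]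
  simp only [Af, Gf, line_zero]
  induction m using Fin.cases with
  | zero =>
      simp [e, Pi.single_apply, Fin.succ_ne_zero]
  | succ k =>
      simp [e, Pi.single_apply, Fin.succ_ne_zero, Fin.succ_inj]
lemma Df_apply_e (j : Fin 4) (q : Fin 4 → ℝ) :
    Df η q (e j)
      = Af η 0 q * e j 0
        + ∑ i : Fin 3, (Af η i.succ q * e j i.succ + q i.succ * (e j 0 * Bf η i.succ 0 q))
        + (1/2 : ℝ) * ∑ i : Fin 3, ∑ j' : Fin 3,
            (Bf η i.succ j'.succ q * (q i.succ * e j j'.succ + q j'.succ * e j i.succ)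
              + (q i.succ * q j'.succ)
                  * (e j 0 * fderiv ℝ (Hf η i.succ j'.succ) (line (q 0)) (e 0))) := by
  simp only [Df, ContinuousLinearMap.add_apply, ContinuousLinearMap.smul_apply,
    ContinuousLinearMap.coe_sum', Finset.sum_apply, ContinuousLinearMap.coe_comp',
    Function.comp_apply, smul_eq_mul, pr, ContinuousLinearMap.proj_apply, P_e,
    map_smul, Bf, Hf]

lemma key2 (hη : ContDiff ℝ 2 η)
    (hclosedC : ∀ (θ : ℝ) (a b : Fin 4),
      fderiv ℝ (fun q => η q (e a)) (line θ) (e b)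
        = fderiv ℝ (fun q => η q (e b)) (line θ) (e a))
    (θ : ℝ) (j : Fin 4) (k : Fin 3) :
    fderiv ℝ (fun q => Gf η j q - Df η q (e j)) (line θ) (e k.succ) = 0 := by
  have hsym : ∀ a b : Fin 4, Hf η a b (line θ) = Hf η b a (line θ) := fun a b =>
    hclosedC θ a b
  -- derivative of the Df-component function at line θ
  have hΦ : HasFDerivAt (fun q => Df η q (e j))
      ( ((e j 0) • (fderiv ℝ (Gf η 0) (line (line θ 0)) ∘L P))
        + ∑ i : Fin 3,
            (((e j i.succ) • (fderiv ℝ (Gf η i.succ) (line (line θ 0)) ∘L P))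
              + (((line θ) i.succ)
                    • ((e j 0) • (fderiv ℝ (Hf η i.succ 0) (line (line θ 0)) ∘L P))
                  + (e j 0 * Bf η i.succ 0 (line θ)) • pr i.succ))
        + (1/2 : ℝ) • ∑ i : Fin 3, ∑ j' : Fin 3,
            (((Bf η i.succ j'.succ (line θ))
                  • ((e j j'.succ) • pr i.succ + (e j i.succ) • pr j'.succ)
                + ((line θ) i.succ * e j j'.succ + (line θ) j'.succ * e j i.succ)
                    • (fderiv ℝ (Hf η i.succ j'.succ) (line (line θ 0)) ∘L P))
              + (e j 0 * fderiv ℝ (Hf η i.succ j'.succ) (line ((line θ) 0)) (e 0))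
                  • (((line θ) i.succ) • pr j'.succ + ((line θ) j'.succ) • pr i.succ)) )
      (line θ) := by
    have hfun : (fun q => Df η q (e j))
        = fun q => Af η 0 q * e j 0
          + ∑ i : Fin 3, (Af η i.succ q * e j i.succ + q i.succ * (e j 0 * Bf η i.succ 0 q))
          + (1/2 : ℝ) * ∑ i : Fin 3, ∑ j' : Fin 3,
              (Bf η i.succ j'.succ q * (q i.succ * e j j'.succ + q j'.succ * e j i.succ)
                + (q i.succ * q j'.succ)
                    * (e j 0 * fderiv ℝ (Hf η i.succ j'.succ) (line (q 0)) (e 0))) :=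
      funext fun q => Df_apply_e j q
    rw [hfun]
    refine HasFDerivAt.add (HasFDerivAt.add ?_ (HasFDerivAt.fun_sum fun i _ => ?_))
      ((HasFDerivAt.fun_sum fun i _ => HasFDerivAt.fun_sum fun j' _ => ?_).const_mul _)
    · exact (hAf hη 0 (line θ)).mul_const _
    · exact ((hAf hη i.succ (line θ)).mul_const _).add
        ((hproj i.succ (line θ)).mul ((hBf hη i.succ 0 (line θ)).const_mul _))
    · refine HasFDerivAt.add ?_ ?_
      · exact (hBf hη i.succ j'.succ (line θ)).mul
          (((hproj i.succ (line θ)).mul_const _).add ((hproj j'.succ (line θ)).mul_const _))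
      · exact hasFDerivAt_mul_zero
          ((continuous_const.mul (hBf_cont hη i.succ j'.succ)).continuousAt)
          ((hproj i.succ (line θ)).mul (hproj j'.succ (line θ)))
          (by simp [line_succ])
  have hGj : HasFDerivAt (Gf η j) (fderiv ℝ (Gf η j) (line θ)) (line θ) :=
    (((hG hη j).differentiable (by norm_num)).differentiableAt).hasFDerivAt
  rw [(hGj.fun_sub hΦ).fderiv]
  simp only [ContinuousLinearMap.coe_sub', Pi.sub_apply, ContinuousLinearMap.add_apply,
    ContinuousLinearMap.smul_apply, ContinuousLinearMap.coe_sum', Finset.sum_apply,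
    ContinuousLinearMap.coe_comp', Function.comp_apply, smul_eq_mul, pr,
    ContinuousLinearMap.proj_apply, P_e_succ, map_zero, mul_zero, zero_mul, line_succ,
    line_line, e_succ_zero, e_succ_succ, zero_add, add_zero, zero_smul, smul_zero,
    Finset.sum_const_zero]
  simp only [Bf, line_line, mul_ite, ite_mul, mul_zero, zero_mul, mul_one, mul_add,
    Finset.sum_add_distrib, Finset.sum_ite_irrel, Finset.sum_const_zero,
    Finset.sum_ite_eq', Finset.mem_univ, if_true]
  have hswap : (∑ x : Fin 3, Hf η x.succ k.succ (line θ) * e j x.succ)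
      = ∑ x : Fin 3, Hf η k.succ x.succ (line θ) * e j x.succ :=
    Finset.sum_congr rfl fun x _ => by rw [hsym]
  rw [hswap]
  have hmain : fderiv ℝ (Gf η j) (line θ) (e k.succ)
      = e j 0 * Hf η k.succ 0 (line θ)
        + ∑ x : Fin 3, Hf η k.succ x.succ (line θ) * e j x.succ := by
    induction j using Fin.cases with
    | zero =>
        have h0 : ∀ x : Fin 3, e (0 : Fin 4) x.succ = 0 := fun x =>
          Pi.single_eq_of_ne (Fin.succ_ne_zero x) 1
        have h1 : e (0 : Fin 4) 0 = 1 := Pi.single_eq_same 0 1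
        simp only [h0, h1, mul_zero, Finset.sum_const_zero, add_zero, one_mul]
        exact hsym 0 k.succ
    | succ m =>
        simp only [e_succ_zero, zero_mul, zero_add, e_succ_succ, mul_ite, mul_one, mul_zero,
          Finset.sum_ite_eq', Finset.mem_univ, if_true]
        exact hsym m.succ k.succ
  rw [hmain]
  ring

/-- If η is a C² covector field on ℝ⁴ whose exterior derivative vanishes along the
line C = {x₁=x₂=x₃=0}, f₀ is a primitive of θ ↦ η₀(θ,0), and
f(θ,x) = f₀(θ) + Σᵢ ηᵢ(θ,0)xᵢ + ½ Σᵢⱼ ∂ηᵢ/∂xⱼ(θ,0)xᵢxⱼ, then η − df vanishes to first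
order along C: it is zero at every point of C, and all its partial derivatives in the
directions x₁,x₂,x₃ of all its components vanish along C. -/
theorem eta_sub_df_vanishes_to_first_order
    (η : (Fin 4 → ℝ) → ((Fin 4 → ℝ) →L[ℝ] ℝ))
    (hη : ContDiff ℝ 2 η)
    (hclosedC : ∀ (θ : ℝ) (j k : Fin 4),
      fderiv ℝ (fun q => η q (e j)) (line θ) (e k)
        = fderiv ℝ (fun q => η q (e k)) (line θ) (e j))
    (f₀ : ℝ → ℝ)
    (hf₀ : ∀ θ : ℝ, HasDerivAt f₀ (η (line θ) (e 0)) θ)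
    (f : (Fin 4 → ℝ) → ℝ)
    (hf : ∀ p : Fin 4 → ℝ,
      f p = f₀ (p 0)
        + (∑ i : Fin 3, η (line (p 0)) (e i.succ) * p i.succ)
        + (1 / 2) * ∑ i : Fin 3, ∑ j : Fin 3,
            fderiv ℝ (fun q => η q (e i.succ)) (line (p 0)) (e j.succ)
              * (p i.succ * p j.succ)) :
    ∀ θ : ℝ,
      η (line θ) = fderiv ℝ f (line θ) ∧
      ∀ (j : Fin 4) (k : Fin 3),
        fderiv ℝ (fun q => η q (e j) - fderiv ℝ f q (e j)) (line θ) (e k.succ) = 0 := by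
  have hfF : f = (fun p => f₀ (p 0) + (∑ i : Fin 3, Af η i.succ p * p i.succ)
      + ((1:ℝ)/2) * ∑ i : Fin 3, ∑ j : Fin 3, Bf η i.succ j.succ p * (p i.succ * p j.succ)) :=
    funext fun p => hf p
  have hDfq : ∀ q : Fin 4 → ℝ, fderiv ℝ f q = Df η q := fun q => by
    rw [hfF]; exact (hasFDerivAt_F hη f₀ hf₀ q).fderiv
  intro θ
  constructor
  · rw [hDfq]
    refine ContinuousLinearMap.coe_injective
      (Module.Basis.ext (Pi.basisFun ℝ (Fin 4)) fun m => ?_)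
    rw [Pi.basisFun_apply]
    exact (Df_line θ m).symm
  · intro j k
    have hfun : (fun q => η q (e j) - fderiv ℝ f q (e j))
        = fun q => Gf η j q - Df η q (e j) := funext fun q => by rw [hDfq q]; rfl
    rw [hfun]
    exact key2 hη hclosedC θ j k
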